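/- (Scalar form of Theorem 4, pure-state case.) Let $\alpha$ be a real number with $(\sqrt{7}-1)/2 \leq \alpha \leq (\sqrt{13}-1)/2$ and $\alpha \neq 1$, let $n \geq 2$, and let $c_2, \dots, c_n$ be nonnegative real numbers with $\sum_{i=2}^{n} c_i \leq 1$. Then $\left(f_\alpha\left(\sum_{i=2}^{n} c_i\right)\right)^2 \leq (n-1) \sum_{i=2}^{n} \left(f_\alpha(c_i)\right)^2$. -/

import Mathlib

/-- The function expressing the Rényi-α entanglement of a two-qubit state as a function of
its squared concurrence:
`f_α(x) = (1/(1-α)) * log₂ [ ((1-√(1-x))/2)^α + ((1+√(1-x))/2)^α ]`. -/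
noncomputable def renyiF (α x : ℝ) : ℝ :=
  (1 / (1 - α)) *
    Real.logb 2 (((1 - Real.sqrt (1 - x)) / 2) ^ α + ((1 + Real.sqrt (1 - x)) / 2) ^ α)

section AuxiliaryLemmas

open Real Set


/-- If `g' ≤ 0` on `[0,∞)` then `g s ≤ g 0` for `s ≥ 0`. -/
lemma aux_le_of_deriv_nonpos {g g' : ℝ → ℝ} (hd : ∀ s, HasDerivAt g (g' s) s)
    (h' : ∀ s, 0 ≤ s → g' s ≤ 0) : ∀ s, 0 ≤ s → g s ≤ g 0 := by
  intro s hs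
  have hA : AntitoneOn g (Ici (0:ℝ)) := by
    apply antitoneOn_of_deriv_nonpos (convex_Ici 0)
    · exact fun x _ => (hd x).continuousAt.continuousWithinAt
    · exact fun x hx => (hd x).differentiableAt.differentiableWithinAt
    · intro x hx
      rw [(hd x).deriv]
      rw [interior_Ici] at hx
      exact h' x (le_of_lt hx)
  exact hA self_mem_Ici hs hs

lemma aux_ge_of_deriv_nonneg {g g' : ℝ → ℝ} (hd : ∀ s, HasDerivAt g (g' s) s)
    (h' : ∀ s, 0 ≤ s → 0 ≤ g' s) : ∀ s, 0 ≤ s → g 0 ≤ g s := by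
  intro s hs
  have := aux_le_of_deriv_nonpos (g := fun u => -g u) (g' := fun u => -g' u)
    (fun s => (hd s).neg) (fun s hs => neg_nonpos.2 (h' s hs)) s hs
  simp only [neg_le_neg_iff] at this
  linarith

lemma aux_hasDerivAt_sinh_mul (k s : ℝ) :
    HasDerivAt (fun u => Real.sinh (k * u)) (k * Real.cosh (k * s)) s := by
  have := (Real.hasDerivAt_sinh (k*s)).comp s ((hasDerivAt_id s).const_mul k)
  exact this.congr_deriv (by ring)

lemma aux_hasDerivAt_cosh_mul (k s : ℝ) :
    HasDerivAt (fun u => Real.cosh (k * u)) (k * Real.sinh (k * s)) s := by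
  have := (Real.hasDerivAt_cosh (k*s)).comp s ((hasDerivAt_id s).const_mul k)
  exact this.congr_deriv (by ring)

/-- `sinh (β s) ≤ β sinh s` for `0 ≤ β ≤ 1`, `0 ≤ s`. -/
lemma aux_sinh_mul_le {β : ℝ} (h0 : 0 ≤ β) (h1 : β ≤ 1) {s : ℝ} (hs : 0 ≤ s) :
    Real.sinh (β * s) ≤ β * Real.sinh s := by
  have hd : ∀ u, HasDerivAt (fun u => β * Real.sinh u - Real.sinh (β * u))
      (β * Real.cosh u - β * Real.cosh (β * u)) u := fun u =>
    ((Real.hasDerivAt_sinh u).const_mul β).sub (aux_hasDerivAt_sinh_mul β u)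
  have h' : ∀ u, 0 ≤ u → 0 ≤ β * Real.cosh u - β * Real.cosh (β * u) := by
    intro u hu
    have : Real.cosh (β * u) ≤ Real.cosh u := by
      rw [Real.cosh_le_cosh]
      rw [abs_of_nonneg (mul_nonneg h0 hu), abs_of_nonneg hu]
      nlinarith
    nlinarith
  have := aux_ge_of_deriv_nonneg hd h' s hs
  simp at this
  linarith

/-- convexity of cosh through exp. -/
lemma aux_cosh_convex {γ x y : ℝ} (h0 : 0 ≤ γ) (h1 : γ ≤ 1) :
    Real.cosh ((1-γ) * x + γ * y) ≤ (1-γ) * Real.cosh x + γ * Real.cosh y := by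
  have hc := convexOn_exp.2 (mem_univ x) (mem_univ y) (by linarith : (0:ℝ) ≤ 1 - γ) h0 (by ring)
  have hc' := convexOn_exp.2 (mem_univ (-x)) (mem_univ (-y)) (by linarith : (0:ℝ) ≤ 1 - γ) h0
    (by ring)
  simp only [smul_eq_mul] at hc hc'
  rw [Real.cosh_eq, Real.cosh_eq, Real.cosh_eq]
  have : -((1-γ)*x + γ*y) = (1-γ)*(-x) + γ*(-y) := by ring
  rw [this]
  linarith


/-- Key inequality for `1 < α`:
`Ψ(s) = 3 sinh((1/2+γ)s) + sinh((1/2-γ)s) - γ sinh(3s/2) - (4+γ) sinh(s/2) ≤ 0`. -/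
lemma aux_psi_nonpos {γ : ℝ} (h0 : 0 < γ) (h13 : γ^2 + 3*γ ≤ 1) {s : ℝ} (hs : 0 ≤ s) :
    3 * Real.sinh ((1/2+γ)*s) + Real.sinh ((1/2-γ)*s)
      - γ * Real.sinh (3/2*s) - (4+γ) * Real.sinh (1/2*s) ≤ 0 := by
  have hγ1 : γ ≤ 1/3 := by nlinarith
  set a : ℝ := 1/2 + γ with ha
  set b : ℝ := 1/2 - γ with hb
  have hb0 : 0 ≤ b := by rw [hb]; linarith
  -- third derivative nonpositive
  have hpsi3 : ∀ u, 0 ≤ u →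
      3*(a*(a*(a * Real.cosh (a*u)))) + b*(b*(b * Real.cosh (b*u)))
      - γ*(3/2*(3/2*(3/2 * Real.cosh (3/2*u)))) - (4+γ)*(1/2*(1/2*(1/2 * Real.cosh (1/2*u)))) ≤ 0 := by
    intro u hu
    have hca : Real.cosh (a*u) ≤ (1-γ) * Real.cosh (1/2*u) + γ * Real.cosh (3/2*u) := by
      have h := aux_cosh_convex (γ := γ) (x := 1/2*u) (y := 3/2*u) h0.le (by linarith)
      have : (1-γ)*(1/2*u) + γ*(3/2*u) = a*u := by rw [ha]; ring
      rwa [this] at h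
    have hcb : Real.cosh (b*u) ≤ Real.cosh (1/2*u) := by
      rw [Real.cosh_le_cosh, abs_of_nonneg (by positivity), abs_of_nonneg (by positivity)]
      nlinarith
    have hc13 : Real.cosh (1/2*u) ≤ Real.cosh (3/2*u) := by
      rw [Real.cosh_le_cosh, abs_of_nonneg (by positivity), abs_of_nonneg (by positivity)]
      nlinarith
    have hc1 : 1 ≤ Real.cosh (1/2*u) := Real.one_le_cosh _
    have ha3 : (0:ℝ) ≤ 3*a^3 := by positivity
    have hb3 : (0:ℝ) ≤ b^3 := by positivity
    -- combine
    have e1 : 3*a^3 * Real.cosh (a*u) ≤ 3*a^3 * ((1-γ) * Real.cosh (1/2*u) + γ * Real.cosh (3/2*u)) :=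
      mul_le_mul_of_nonneg_left hca ha3
    have e2 : b^3 * Real.cosh (b*u) ≤ b^3 * Real.cosh (1/2*u) :=
      mul_le_mul_of_nonneg_left hcb hb3
    have e3 : (γ*(27/8) - 3*a^3*γ) * Real.cosh (1/2*u) ≤ (γ*(27/8) - 3*a^3*γ) * Real.cosh (3/2*u) := by
      apply mul_le_mul_of_nonneg_left hc13
      rw [ha]; nlinarith
    have e4 : (3*a^3 + b^3 - γ*(27/8) - (4+γ)/8) * Real.cosh (1/2*u) ≤ 0 := by
      apply mul_nonpos_of_nonpos_of_nonneg _ (by linarith)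
      rw [ha, hb]; nlinarith
    nlinarith [e1, e2, e3, e4]
  -- second derivative
  have hd3 : ∀ u, HasDerivAt (fun u => 3*(a*(a * Real.sinh (a*u))) + b*(b * Real.sinh (b*u))
      - γ*(3/2*(3/2 * Real.sinh (3/2*u))) - (4+γ)*(1/2*(1/2 * Real.sinh (1/2*u))))
      (3*(a*(a*(a * Real.cosh (a*u)))) + b*(b*(b * Real.cosh (b*u)))
      - γ*(3/2*(3/2*(3/2 * Real.cosh (3/2*u)))) - (4+γ)*(1/2*(1/2*(1/2 * Real.cosh (1/2*u))))) u := by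
    intro u
    exact ((((aux_hasDerivAt_sinh_mul a u).const_mul a).const_mul a).const_mul 3
      |>.add (((aux_hasDerivAt_sinh_mul b u).const_mul b).const_mul b))
      |>.sub ((((aux_hasDerivAt_sinh_mul (3/2) u).const_mul (3/2)).const_mul (3/2)).const_mul γ)
      |>.sub ((((aux_hasDerivAt_sinh_mul (1/2) u).const_mul (1/2)).const_mul (1/2)).const_mul (4+γ))
  have hpsi2 : ∀ u, 0 ≤ u → 3*(a*(a * Real.sinh (a*u))) + b*(b * Real.sinh (b*u))
      - γ*(3/2*(3/2 * Real.sinh (3/2*u))) - (4+γ)*(1/2*(1/2 * Real.sinh (1/2*u))) ≤ 0 := by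
    intro u hu
    have h := aux_le_of_deriv_nonpos hd3 hpsi3 u hu
    simpa using h
  have hd2 : ∀ u, HasDerivAt (fun u => 3*(a * Real.cosh (a*u)) + b * Real.cosh (b*u)
      - γ*(3/2 * Real.cosh (3/2*u)) - (4+γ)*(1/2 * Real.cosh (1/2*u)))
      (3*(a*(a * Real.sinh (a*u))) + b*(b * Real.sinh (b*u))
      - γ*(3/2*(3/2 * Real.sinh (3/2*u))) - (4+γ)*(1/2*(1/2 * Real.sinh (1/2*u)))) u := by
    intro u
    exact (((aux_hasDerivAt_cosh_mul a u).const_mul a).const_mul 3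
      |>.add ((aux_hasDerivAt_cosh_mul b u).const_mul b))
      |>.sub (((aux_hasDerivAt_cosh_mul (3/2) u).const_mul (3/2)).const_mul γ)
      |>.sub (((aux_hasDerivAt_cosh_mul (1/2) u).const_mul (1/2)).const_mul (4+γ))
  have hpsi1 : ∀ u, 0 ≤ u → 3*(a * Real.cosh (a*u)) + b * Real.cosh (b*u)
      - γ*(3/2 * Real.cosh (3/2*u)) - (4+γ)*(1/2 * Real.cosh (1/2*u)) ≤ 0 := by
    intro u hu
    have h := aux_le_of_deriv_nonpos hd2 hpsi2 u hu
    simp only [mul_zero, Real.cosh_zero, mul_one] at h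
    have h0' : 3*(a*1) + b*1 - γ*(3/2*1) - (4+γ)*(1/2*1) = 0 := by rw [ha, hb]; ring
    calc _ ≤ 3*(a*1) + b*1 - γ*(3/2*1) - (4+γ)*(1/2*1) := by simpa using h
    _ = 0 := h0'
  have hd1 : ∀ u, HasDerivAt (fun u => 3 * Real.sinh (a*u) + Real.sinh (b*u)
      - γ * Real.sinh (3/2*u) - (4+γ) * Real.sinh (1/2*u))
      (3*(a * Real.cosh (a*u)) + b * Real.cosh (b*u)
      - γ*(3/2 * Real.cosh (3/2*u)) - (4+γ)*(1/2 * Real.cosh (1/2*u))) u := by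
    intro u
    exact (((aux_hasDerivAt_sinh_mul a u).const_mul 3
      |>.add (aux_hasDerivAt_sinh_mul b u))
      |>.sub ((aux_hasDerivAt_sinh_mul (3/2) u).const_mul γ))
      |>.sub ((aux_hasDerivAt_sinh_mul (1/2) u).const_mul (4+γ))
  have h := aux_le_of_deriv_nonpos hd1 hpsi1 s hs
  simpa using h


/-- Φ ≥ 0 for 0 < α < 1. -/
lemma aux_phiA {α r : ℝ} (h0 : 0 < α) (h1 : α < 1) (hr0 : 0 < r) (hr1 : r < 1) :
    0 ≤ (1-α)*(1-r^3) - (3+α)*(r*(1-r)) + r^α*(1-3*r) + r^(2-α)*(3-r) := by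
  set s : ℝ := -Real.log r with hsdef
  have hlog : Real.log r = -s := by rw [hsdef]; ring
  have hs : 0 ≤ s := by
    rw [hsdef]; simp only [le_neg, neg_zero]
    exact (Real.log_nonpos_iff hr0.le).2 hr1.le
  have hrexp : r = Real.exp (-s) := by rw [← hlog, Real.exp_log hr0]
  set U : ℝ := Real.exp ((1-α)*s) with hUdef
  set W : ℝ := Real.exp (-((1-α)*s)) with hWdef
  have hUpos : 0 < U := Real.exp_pos _
  have hWpos : 0 < W := Real.exp_pos _
  have hUW : U * W = 1 := by rw [hUdef, hWdef, ← Real.exp_add]; simp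
  have hU1 : 1 ≤ U := Real.one_le_exp (by nlinarith)
  have hra : r^α = r * U := by
    rw [Real.rpow_def_of_pos hr0, hlog, hrexp, hUdef, ← Real.exp_add]
    congr 1; ring
  have hrb : r^(2-α) = r * W := by
    rw [Real.rpow_def_of_pos hr0, hlog, hrexp, hWdef, ← Real.exp_add]
    congr 1; ring
  have hsinh : Real.sinh ((1-α)*s) ≤ (1-α) * Real.sinh s := aux_sinh_mul_le (by linarith) (by linarith) hs
  have hsh1 : Real.sinh ((1-α)*s) = (U - W)/2 := by rw [Real.sinh_eq, hUdef, hWdef]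
  have hsh2 : Real.sinh s = (r⁻¹ - r)/2 := by
    rw [Real.sinh_eq]
    congr 2
    · rw [hrexp, ← Real.exp_neg]; congr 1; ring
    · rw [hrexp]
  have hkey : r * (U - W) ≤ (1-α) * (1 - r^2) := by
    rw [hsh1, hsh2] at hsinh
    have h2 : r * ((U - W)/2) ≤ r * ((1-α) * ((r⁻¹ - r)/2)) :=
      mul_le_mul_of_nonneg_left hsinh hr0.le
    have hrr : r * r⁻¹ = 1 := mul_inv_cancel₀ hr0.ne'
    nlinarith [h2]
  have hplus : 2 ≤ U + W := by nlinarith [sq_nonneg (U - 1)]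
  rw [hra, hrb]
  have e1 : 4*(r*(1-r)) ≤ 2*(r*(1-r))*(U+W) := by nlinarith [mul_pos hr0 (by linarith : (0:ℝ) < 1 - r)]
  have e2 : (1+r)*(r*(U-W)) ≤ (1+r)*((1-α)*(1-r^2)) :=
    mul_le_mul_of_nonneg_left hkey (by linarith)
  nlinarith [e1, e2]

/-- Φ ≤ 0 for 1 < α with α² + α ≤ 3. -/
lemma aux_phiB {α r : ℝ} (h1 : 1 < α) (h13 : α^2 + α ≤ 3) (hr0 : 0 < r) (hr1 : r < 1) :
    (1-α)*(1-r^3) - (3+α)*(r*(1-r)) + r^α*(1-3*r) + r^(2-α)*(3-r) ≤ 0 := by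
  set s : ℝ := -Real.log r with hsdef
  have hlog : Real.log r = -s := by rw [hsdef]; ring
  have hs : 0 ≤ s := by
    rw [hsdef]; simp only [le_neg, neg_zero]
    exact (Real.log_nonpos_iff hr0.le).2 hr1.le
  have hrexp : r = Real.exp (-s) := by rw [← hlog, Real.exp_log hr0]
  set E : ℝ := Real.exp (-(2⁻¹*s)) with hEdef
  set X : ℝ := Real.exp (-(α*s)) with hXdef
  have hEpos : 0 < E := Real.exp_pos _
  have hXpos : 0 < X := Real.exp_pos _
  have hrE : r = E^2 := by
    rw [hrexp, hEdef, sq, ← Real.exp_add]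
    congr 1; ring
  have hra : r^α = X := by
    rw [Real.rpow_def_of_pos hr0, hlog, hXdef]; congr 1; ring
  have hrb : r^(2-α) = E^4/X := by
    rw [Real.rpow_def_of_pos hr0, hlog]
    rw [show E^4 = Real.exp (-(2⁻¹*s)) * Real.exp (-(2⁻¹*s)) * Real.exp (-(2⁻¹*s)) * Real.exp (-(2⁻¹*s)) by rw [hEdef]; ring,
      ← Real.exp_add, ← Real.exp_add, ← Real.exp_add, hXdef, ← Real.exp_sub]
    congr 1; ring
  have hpsi := aux_psi_nonpos (γ := α - 1) (by linarith) (by nlinarith) hs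
  -- rewrite the sinh's in exponential form
  have hx1 : Real.sinh ((1/2+(α-1))*s) = (E/X - X/E)/2 := by
    rw [Real.sinh_eq]
    congr 2
    · rw [hEdef, hXdef, ← Real.exp_sub]; congr 1; ring
    · rw [hEdef, hXdef, ← Real.exp_sub]; congr 1; ring
  have hx2 : Real.sinh ((1/2-(α-1))*s) = (X/E^3 - E^3/X)/2 := by
    have hE3 : E^3 = Real.exp (-(3/2*s)) := by
      rw [hEdef, show (3:ℕ) = 3 from rfl, pow_succ, sq, ← Real.exp_add, ← Real.exp_add]
      congr 1; ring
    rw [Real.sinh_eq]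
    congr 2
    · rw [hE3, hXdef, ← Real.exp_sub]; congr 1; ring
    · rw [hE3, hXdef, ← Real.exp_sub]; congr 1; ring
  have hx3 : Real.sinh (3/2*s) = (1/E^3 - E^3)/2 := by
    have hE3 : E^3 = Real.exp (-(3/2*s)) := by
      rw [hEdef, show (3:ℕ) = 3 from rfl, pow_succ, sq, ← Real.exp_add, ← Real.exp_add]
      congr 1; ring
    rw [Real.sinh_eq, hE3]
    congr 2
    rw [eq_div_iff (ne_of_gt (Real.exp_pos _)), ← Real.exp_add]; simp
  have hx4 : Real.sinh (1/2*s) = (1/E - E)/2 := by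
    rw [Real.sinh_eq, hEdef]
    congr 2
    · rw [eq_div_iff (ne_of_gt (Real.exp_pos _)), ← Real.exp_add]; simp
    · norm_num
  rw [hx1, hx2, hx3, hx4] at hpsi
  have hmul : (2*E^3) * (3 * ((E/X - X/E)/2) + ((X/E^3 - E^3/X)/2)
      - (α-1) * ((1/E^3 - E^3)/2) - (4+(α-1)) * ((1/E - E)/2)) ≤ 0 :=
    mul_nonpos_of_nonneg_of_nonpos (by positivity) hpsi
  have hident : (1-α)*(1-r^3) - (3+α)*(r*(1-r)) + r^α*(1-3*r) + r^(2-α)*(3-r)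
      = (2*E^3) * (3 * ((E/X - X/E)/2) + ((X/E^3 - E^3/X)/2)
      - (α-1) * ((1/E^3 - E^3)/2) - (4+(α-1)) * ((1/E - E)/2)) := by
    rw [hra, hrb, hrE]
    field_simp
    ring
  linarith [hident ▸ hmul]



noncomputable def auxP (x : ℝ) : ℝ := (1 - Real.sqrt (1 - x)) / 2
noncomputable def auxQ (x : ℝ) : ℝ := (1 + Real.sqrt (1 - x)) / 2
noncomputable def auxS (α x : ℝ) : ℝ := auxP x ^ α + auxQ x ^ α
noncomputable def auxSd (α x : ℝ) : ℝ :=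
  α * (auxP x ^ (α-1) - auxQ x ^ (α-1)) / (4 * Real.sqrt (1 - x))
noncomputable def auxSdd (α x : ℝ) : ℝ :=
  α*(α-1)*(auxP x ^ (α-2) + auxQ x ^ (α-2))/(16*(Real.sqrt (1-x))^2)
  + α*(auxP x ^ (α-1) - auxQ x ^ (α-1))/(8*(Real.sqrt (1-x))^3)
noncomputable def auxFd (α x : ℝ) : ℝ := (1/((1-α) * Real.log 2)) * (auxSd α x / auxS α x)
noncomputable def auxFdd (α x : ℝ) : ℝ :=
  (1/((1-α) * Real.log 2)) * ((auxSdd α x * auxS α x - (auxSd α x)^2) / (auxS α x)^2)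

lemma aux_sqrt_pos {x : ℝ} (hx1 : x < 1) : 0 < Real.sqrt (1 - x) :=
  Real.sqrt_pos.2 (by linarith)

lemma aux_sqrt_lt_one {x : ℝ} (hx0 : 0 < x) (hx2 : x ≤ 1) : Real.sqrt (1 - x) < 1 := by
  have h := Real.sqrt_lt_sqrt (by linarith : (0:ℝ) ≤ 1 - x) (by linarith : 1 - x < 1)
  simpa using h

lemma aux_P_pos {x : ℝ} (hx0 : 0 < x) (hx2 : x ≤ 1) : 0 < auxP x := by
  have := aux_sqrt_lt_one hx0 hx2
  rw [auxP]; linarith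

lemma aux_Q_pos {x : ℝ} (hx1 : x < 1) : 0 < auxQ x := by
  have := aux_sqrt_pos hx1
  rw [auxQ]; linarith

lemma aux_Q_pos' {x : ℝ} : 0 < auxQ x ∨ True := Or.inr trivial

lemma aux_S_pos {α x : ℝ} (hα0 : 0 < α) (hx0 : 0 ≤ x) (hx1 : x ≤ 1) : 0 < auxS α x := by
  have h1 : Real.sqrt (1 - x) ≤ 1 := Real.sqrt_le_one.mpr (by linarith)
  have h2 : 0 ≤ Real.sqrt (1 - x) := Real.sqrt_nonneg _
  have hq : 0 < auxQ x := by rw [auxQ]; linarith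
  have hp : 0 ≤ auxP x := by rw [auxP]; linarith
  have := Real.rpow_pos_of_pos hq α
  have := Real.rpow_nonneg hp α
  rw [auxS]; linarith

lemma aux_hasDerivAt_sqrt1x {x : ℝ} (hx1 : x < 1) :
    HasDerivAt (fun y => Real.sqrt (1 - y)) (-(1/(2 * Real.sqrt (1-x)))) x := by
  have h := (Real.hasDerivAt_sqrt (by intro h; nlinarith [h] : (1:ℝ) - x ≠ 0)).comp x
    ((hasDerivAt_id x).const_sub 1)
  exact h.congr_deriv (by ring)
lemma aux_hasDerivAt_P {x : ℝ} (hx1 : x < 1) :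
    HasDerivAt auxP (1/(4 * Real.sqrt (1-x))) x := by
  have h := ((aux_hasDerivAt_sqrt1x hx1).const_sub 1).div_const 2
  exact h.congr_deriv (by ring)

lemma aux_hasDerivAt_Q {x : ℝ} (hx1 : x < 1) :
    HasDerivAt auxQ (-(1/(4 * Real.sqrt (1-x)))) x := by
  have h := ((aux_hasDerivAt_sqrt1x hx1).const_add 1).div_const 2
  exact h.congr_deriv (by ring)

lemma aux_hasDerivAt_S {α x : ℝ} (hx0 : 0 < x) (hx1 : x < 1) :
    HasDerivAt (auxS α) (auxSd α x) x := by
  have hp0 := aux_P_pos hx0 hx1.le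
  have hq0 := aux_Q_pos hx1
  have ht0 := aux_sqrt_pos hx1
  have hP := (Real.hasDerivAt_rpow_const (p := α) (Or.inl hp0.ne')).comp x (aux_hasDerivAt_P hx1)
  have hQ := (Real.hasDerivAt_rpow_const (p := α) (Or.inl hq0.ne')).comp x (aux_hasDerivAt_Q hx1)
  have hP' : HasDerivAt (fun y => auxP y ^ α)
      (α * auxP x ^ (α - 1) * (1 / (4 * Real.sqrt (1 - x)))) x := hP
  have hQ' : HasDerivAt (fun y => auxQ y ^ α)
      (α * auxQ x ^ (α - 1) * -(1 / (4 * Real.sqrt (1 - x)))) x := hQ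
  have h := hP'.add hQ'
  have heq : (fun y => auxP y ^ α + auxQ y ^ α) = auxS α := by funext y; rw [auxS]
  exact h.congr_deriv (by rw [auxSd]; field_simp; ring)

lemma aux_hasDerivAt_Sd {α x : ℝ} (hx0 : 0 < x) (hx1 : x < 1) :
    HasDerivAt (auxSd α) (auxSdd α x) x := by
  have hp0 := aux_P_pos hx0 hx1.le
  have hq0 := aux_Q_pos hx1
  have ht0 := aux_sqrt_pos hx1
  have hP := (Real.hasDerivAt_rpow_const (p := α - 1) (Or.inl hp0.ne')).comp x
    (aux_hasDerivAt_P hx1)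
  have hQ := (Real.hasDerivAt_rpow_const (p := α - 1) (Or.inl hq0.ne')).comp x
    (aux_hasDerivAt_Q hx1)
  have hP' : HasDerivAt (fun y => auxP y ^ (α-1))
      ((α-1) * auxP x ^ (α-1-1) * (1 / (4 * Real.sqrt (1 - x)))) x := hP
  have hQ' : HasDerivAt (fun y => auxQ y ^ (α-1))
      ((α-1) * auxQ x ^ (α-1-1) * -(1 / (4 * Real.sqrt (1 - x)))) x := hQ
  have hnum : HasDerivAt (fun y => α * (auxP y ^ (α-1) - auxQ y ^ (α-1)))
      (α * ((α-1) * auxP x ^ (α-1-1) * (1/(4 * Real.sqrt (1-x)))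
        - (α-1) * auxQ x ^ (α-1-1) * -(1/(4 * Real.sqrt (1-x))))) x :=
    (hP'.sub hQ').const_mul α
  have hden : HasDerivAt (fun y => 4 * Real.sqrt (1 - y))
      (4 * (-(1/(2 * Real.sqrt (1-x))))) x := (aux_hasDerivAt_sqrt1x hx1).const_mul 4
  have h := hnum.div hden (by positivity)
  have heq : (fun y => α * (auxP y ^ (α-1) - auxQ y ^ (α-1)) / (4 * Real.sqrt (1 - y)))
      = auxSd α := by funext y; rw [auxSd]
  exact h.congr_deriv (by rw [auxSdd, show α - 1 - 1 = α - 2 by ring]; field_simp; ring)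

lemma aux_renyiF_eq (α : ℝ) : renyiF α = fun x => (1/(1-α)) * (Real.log (auxS α x) / Real.log 2) := by
  funext x
  rw [renyiF, Real.logb, auxS, auxP, auxQ]

lemma aux_hasDerivAt_F {α x : ℝ} (hα0 : 0 < α) (hx0 : 0 < x) (hx1 : x < 1) :
    HasDerivAt (renyiF α) (auxFd α x) x := by
  have hS0 := aux_S_pos hα0 hx0.le hx1.le
  have hlog := (Real.hasDerivAt_log hS0.ne').comp x (aux_hasDerivAt_S hx0 hx1)
  have h := (hlog.div_const (Real.log 2)).const_mul (1/(1-α))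
  rw [aux_renyiF_eq]
  exact h.congr_deriv (by rw [auxFd]; field_simp)

lemma aux_hasDerivAt_Fd {α x : ℝ} (hα0 : 0 < α) (hx0 : 0 < x) (hx1 : x < 1) :
    HasDerivAt (auxFd α) (auxFdd α x) x := by
  have hS0 := aux_S_pos hα0 hx0.le hx1.le
  have h := ((aux_hasDerivAt_Sd (α := α) hx0 hx1).div (aux_hasDerivAt_S (α := α) hx0 hx1) hS0.ne').const_mul
    (1/((1-α) * Real.log 2))
  have heq : (fun y => (1/((1-α) * Real.log 2)) * (auxSd α y / auxS α y)) = auxFd α := by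
    funext y; rw [auxFd]
  exact h.congr_deriv (by rw [auxFdd]; ring)

lemma aux_Fdd_nonpos {α x : ℝ} (hα0 : 0 < α) (hαne : α ≠ 1) (h13 : α^2 + α ≤ 3)
    (hx0 : 0 < x) (hx1 : x < 1) : auxFdd α x ≤ 0 := by
  have hp0 := aux_P_pos hx0 hx1.le
  have hq0 := aux_Q_pos hx1
  have ht0 := aux_sqrt_pos hx1
  have hS0 := aux_S_pos hα0 hx0.le hx1.le
  have hL2 : 0 < Real.log 2 := Real.log_pos (by norm_num)
  have hα1 : (1:ℝ) - α ≠ 0 := by intro h; exact hαne (by linarith)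
  -- abbreviations
  set t := Real.sqrt (1 - x) with htdef
  set p := auxP x with hpdef
  set q := auxQ x with hqdef
  have htqp : t = q - p := by rw [hpdef, hqdef, auxP, auxQ]; ring
  set P := p ^ α with hPdef
  set Q := q ^ α with hQdef
  have hPpos : 0 < P := Real.rpow_pos_of_pos hp0 α
  have hQpos : 0 < Q := Real.rpow_pos_of_pos hq0 α
  have hpa1 : p ^ (α - 1) = P / p := by rw [hPdef, Real.rpow_sub hp0, Real.rpow_one]
  have hqa1 : q ^ (α - 1) = Q / q := by rw [hQdef, Real.rpow_sub hq0, Real.rpow_one]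
  have hpa2 : p ^ (α - 2) = P / p^2 := by
    rw [hPdef, Real.rpow_sub hp0, Real.rpow_two]
  have hqa2 : q ^ (α - 2) = Q / q^2 := by
    rw [hQdef, Real.rpow_sub hq0, Real.rpow_two]
  -- the ratio r = p/q
  have hr0 : 0 < p / q := div_pos hp0 hq0
  have hr1 : p / q < 1 := (div_lt_one hq0).2 (by rw [hpdef, hqdef, auxP, auxQ]; linarith)
  have hra : (p/q) ^ α = P / Q := by rw [hPdef, hQdef, Real.div_rpow hp0.le hq0.le]
  have hrb : (p/q) ^ (2 - α) = p^2 * Q / (q^2 * P) := by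
    rw [show (2:ℝ) - α = 2 - α from rfl, Real.rpow_sub hr0, Real.rpow_two, hra, div_pow]
    field_simp
  -- the Φ inequality
  have hphi : 0 ≤ (1-α) * ((1-α)*(1-(p/q)^3) - (3+α)*((p/q)*(1-(p/q)))
      + (p/q)^α*(1-3*(p/q)) + (p/q)^(2-α)*(3-(p/q))) := by
    rcases lt_or_gt_of_ne hαne with h | h
    · exact mul_nonneg (by linarith) (aux_phiA hα0 h hr0 hr1)
    · have := aux_phiB h h13 hr0 hr1
      nlinarith [this]
  rw [hra, hrb] at hphi
  -- the algebraic identity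
  have hid : (1-α) * (auxSdd α x * auxS α x - (auxSd α x)^2)
      = -((α * (P * Q * q / p^2)) / (16 * t^3)) *
        ((1-α) * ((1-α)*(1-(p/q)^3) - (3+α)*((p/q)*(1-(p/q)))
          + (P/Q)*(1-3*(p/q)) + (p^2*Q/(q^2*P))*(3-(p/q)))) := by
    rw [auxSdd, auxS, auxSd, ← htdef, ← hpdef, ← hqdef, hpa1, hqa1, hpa2, hqa2,
      ← hPdef, ← hQdef, htqp]
    have hqp : q - p ≠ 0 := by rw [← htqp]; exact ht0.ne'
    field_simp
    ring
  have hkey : (1-α) * (auxSdd α x * auxS α x - (auxSd α x)^2) ≤ 0 := by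
    rw [hid]
    apply mul_nonpos_of_nonpos_of_nonneg _ hphi
    rw [neg_nonpos]
    positivity
  -- conclude
  have hrw : auxFdd α x = ((1-α) * (auxSdd α x * auxS α x - (auxSd α x)^2))
      / ((1-α)^2 * Real.log 2 * (auxS α x)^2) := by
    rw [auxFdd]
    field_simp
  rw [hrw]
  apply div_nonpos_of_nonpos_of_nonneg hkey
  positivity

lemma aux_contF {α : ℝ} (hα0 : 0 < α) : ContinuousOn (renyiF α) (Icc 0 1) := by
  rw [aux_renyiF_eq]
  have hp : Continuous auxP := by
    rw [show auxP = fun x => (1 - Real.sqrt (1 - x))/2 from rfl]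
    fun_prop
  have hq : Continuous auxQ := by
    rw [show auxQ = fun x => (1 + Real.sqrt (1 - x))/2 from rfl]
    fun_prop
  have hS : ContinuousOn (auxS α) (Icc 0 1) := by
    rw [show auxS α = fun x => auxP x ^ α + auxQ x ^ α from rfl]
    exact (hp.continuousOn.rpow_const (fun x _ => Or.inr hα0.le)).add
      (hq.continuousOn.rpow_const (fun x _ => Or.inr hα0.le))
  exact continuousOn_const.mul ((hS.log (fun x hx => (aux_S_pos hα0 hx.1 hx.2).ne')).div_const _)

lemma aux_concave {α : ℝ} (hα0 : 0 < α) (hαne : α ≠ 1) (h13 : α^2 + α ≤ 3) :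
    ConcaveOn ℝ (Icc 0 1) (renyiF α) := by
  apply concaveOn_of_hasDerivWithinAt2_nonpos (f' := auxFd α) (f'' := auxFdd α)
    (convex_Icc 0 1) (aux_contF hα0)
  · intro x hx
    rw [interior_Icc] at hx
    exact (aux_hasDerivAt_F hα0 hx.1 hx.2).hasDerivWithinAt
  · intro x hx
    rw [interior_Icc] at hx
    exact (aux_hasDerivAt_Fd hα0 hx.1 hx.2).hasDerivWithinAt
  · intro x hx
    rw [interior_Icc] at hx
    exact aux_Fdd_nonpos hα0 hαne h13 hx.1 hx.2

lemma aux_renyiF_zero {α : ℝ} (hα0 : α ≠ 0) : renyiF α 0 = 0 := by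
  rw [renyiF]
  rw [show (1:ℝ) - 0 = 1 by norm_num, Real.sqrt_one]
  rw [show ((1:ℝ) - 1)/2 = 0 by norm_num, show ((1:ℝ) + 1)/2 = 1 by norm_num]
  rw [Real.zero_rpow hα0, Real.one_rpow]
  norm_num

lemma aux_renyiF_nonneg {α x : ℝ} (hα0 : 0 < α) (hαne : α ≠ 1) (hx0 : 0 ≤ x) (hx1 : x ≤ 1) :
    0 ≤ renyiF α x := by
  have h1 : Real.sqrt (1 - x) ≤ 1 := Real.sqrt_le_one.mpr (by linarith)
  have h2 : 0 ≤ Real.sqrt (1 - x) := Real.sqrt_nonneg _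
  set p := (1 - Real.sqrt (1 - x)) / 2 with hp
  set q := (1 + Real.sqrt (1 - x)) / 2 with hq
  have hp0 : 0 ≤ p := by rw [hp]; linarith
  have hq0 : 0 < q := by rw [hq]; linarith
  have hp1 : p ≤ 1 := by rw [hp]; linarith
  have hq1 : q ≤ 1 := by rw [hq]; linarith
  have hpq : p + q = 1 := by rw [hp, hq]; ring
  rw [renyiF]
  rcases lt_or_gt_of_ne hαne with h | h
  · -- α < 1 : S ≥ 1
    have hS1 : (1:ℝ) ≤ p ^ α + q ^ α := by
      have hqα : q ≤ q ^ α := by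
        have := Real.rpow_le_rpow_of_exponent_ge hq0 hq1 h.le
        rwa [Real.rpow_one] at this
      rcases eq_or_lt_of_le hp0 with he | hlt
      · have hq1' : q = 1 := by rw [hq]; rw [hp] at he; linarith
        rw [← he, Real.zero_rpow (by linarith), hq1', Real.one_rpow]
        norm_num
      · have hpα : p ≤ p ^ α := by
          have := Real.rpow_le_rpow_of_exponent_ge hlt hp1 h.le
          rwa [Real.rpow_one] at this
        linarith
    have hlog := Real.logb_nonneg (b := 2) (by norm_num) hS1
    have h1α : 0 < 1/(1-α) := by apply div_pos one_pos; linarith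
    exact mul_nonneg h1α.le hlog
  · -- α > 1 : S ≤ 1
    have hS1 : p ^ α + q ^ α ≤ 1 := by
      have hqα : q ^ α ≤ q := by
        have := Real.rpow_le_rpow_of_exponent_ge hq0 hq1 h.le
        rwa [Real.rpow_one] at this
      rcases eq_or_lt_of_le hp0 with he | hlt
      · rw [← he, Real.zero_rpow (by linarith)]; linarith
      · have hpα : p ^ α ≤ p := by
          have := Real.rpow_le_rpow_of_exponent_ge hlt hp1 h.le
          rwa [Real.rpow_one] at this
        linarith
    have hSpos : 0 < p ^ α + q ^ α := by positivity
    have hlog := Real.logb_nonpos (b := 2) (by norm_num) hSpos.le hS1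
    have h1α : 1/(1-α) < 0 := by
      apply div_neg_of_pos_of_neg one_pos
      linarith
    nlinarith [hlog, h1α]

lemma aux_subadd {α x y : ℝ} (hα0 : 0 < α) (hαne : α ≠ 1) (h13 : α^2 + α ≤ 3)
    (hx : 0 ≤ x) (hy : 0 ≤ y) (hxy : x + y ≤ 1) :
    renyiF α (x + y) ≤ renyiF α x + renyiF α y := by
  have hcc := aux_concave hα0 hαne h13
  rcases eq_or_lt_of_le (by linarith : (0:ℝ) ≤ x + y) with h0 | h0
  · have hx0 : x = 0 := by linarith
    have hy0 : y = 0 := by linarith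
    rw [hx0, hy0]
    simp [aux_renyiF_zero hα0.ne']
  · set z := x + y with hz
    have hzI : z ∈ Icc (0:ℝ) 1 := ⟨by linarith, hxy⟩
    have h0I : (0:ℝ) ∈ Icc (0:ℝ) 1 := ⟨le_refl 0, by norm_num⟩
    have hxz : renyiF α x ≥ (x/z) * renyiF α z := by
      have := hcc.2 hzI h0I (by positivity : 0 ≤ x/z) (by positivity : 0 ≤ y/z)
        (by field_simp; try linarith)
      simp only [smul_eq_mul, mul_zero, add_zero] at this
      rw [aux_renyiF_zero hα0.ne'] at this
      have harg : x/z * z = x := by field_simp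
      rw [harg] at this
      linarith
    have hyz : renyiF α y ≥ (y/z) * renyiF α z := by
      have := hcc.2 hzI h0I (by positivity : 0 ≤ y/z) (by positivity : 0 ≤ x/z)
        (by field_simp; try linarith)
      simp only [smul_eq_mul, mul_zero, add_zero] at this
      rw [aux_renyiF_zero hα0.ne'] at this
      have harg : y/z * z = y := by field_simp
      rw [harg] at this
      linarith
    have hsum : (x/z) * renyiF α z + (y/z) * renyiF α z = renyiF α z := by
      field_simp
      ring
    linarith

lemma aux_subadd_sum {α : ℝ} (hα0 : 0 < α) (hαne : α ≠ 1) (h13 : α^2 + α ≤ 3)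
    {ι : Type*} (s : Finset ι) (c : ι → ℝ) (hc : ∀ i ∈ s, 0 ≤ c i)
    (hsum : ∑ i ∈ s, c i ≤ 1) :
    renyiF α (∑ i ∈ s, c i) ≤ ∑ i ∈ s, renyiF α (c i) := by
  classical
  induction s using Finset.induction_on with
  | empty => simp [aux_renyiF_zero hα0.ne']
  | insert a s' hnotmem ih =>
    rw [Finset.sum_insert hnotmem] at hsum ⊢
    rw [Finset.sum_insert hnotmem]
    have hca : 0 ≤ c a := hc a (Finset.mem_insert_self a s')
    have hcs : ∀ i ∈ s', 0 ≤ c i := fun i hi => hc i (Finset.mem_insert_of_mem hi)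
    have hs0 : 0 ≤ ∑ i ∈ s', c i := Finset.sum_nonneg hcs
    have h1 : renyiF α (c a + ∑ i ∈ s', c i) ≤ renyiF α (c a) + renyiF α (∑ i ∈ s', c i) :=
      aux_subadd hα0 hαne h13 hca hs0 hsum
    have h2 := ih hcs (by linarith)
    linarith


end AuxiliaryLemmas

open Finset in
/-- Scalar form of Theorem 4 (pure-state case): for `(√7-1)/2 ≤ α ≤ (√13-1)/2`, `α ≠ 1`,
`n ≥ 2`, and nonnegative reals `c₂, …, c_n` with `∑ cᵢ ≤ 1`, one has
`(f_α(∑ cᵢ))² ≤ (n-1) * ∑ (f_α(cᵢ))²`. -/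
theorem renyiF_sq_monogamy_scalar (α : ℝ) (hα1 : (Real.sqrt 7 - 1) / 2 ≤ α)
    (hα2 : α ≤ (Real.sqrt 13 - 1) / 2) (hα : α ≠ 1)
    (n : ℕ) (hn : 2 ≤ n) (c : ℕ → ℝ) (hc : ∀ i ∈ Icc 2 n, 0 ≤ c i)
    (hsum : ∑ i ∈ Icc 2 n, c i ≤ 1) :
    (renyiF α (∑ i ∈ Icc 2 n, c i)) ^ 2 ≤
      (n - 1 : ℝ) * ∑ i ∈ Icc 2 n, (renyiF α (c i)) ^ 2 := by
  -- basic facts about α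
  have h7 : (1:ℝ) < Real.sqrt 7 := by
    have : (1:ℝ) = Real.sqrt 1 := by simp
    rw [this]
    exact Real.sqrt_lt_sqrt (by norm_num) (by norm_num)
  have hα0 : 0 < α := by linarith
  have h13 : α^2 + α ≤ 3 := by
    have hs13 : Real.sqrt 13 ^ 2 = 13 := Real.sq_sqrt (by norm_num)
    have h2α : 2*α + 1 ≤ Real.sqrt 13 := by linarith
    nlinarith [Real.sqrt_nonneg 13]
  -- subadditivity of f over the sum
  have hsub := aux_subadd_sum hα0 hα h13 (Icc 2 n) c hc hsum
  -- nonnegativity of each term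
  have hnn : ∀ i ∈ Icc 2 n, 0 ≤ renyiF α (c i) := by
    intro i hi
    have hci1 : c i ≤ 1 := by
      calc c i ≤ ∑ j ∈ Icc 2 n, c j := Finset.single_le_sum hc hi
      _ ≤ 1 := hsum
    exact aux_renyiF_nonneg hα0 hα (hc i hi) hci1
  have hFnn : 0 ≤ renyiF α (∑ i ∈ Icc 2 n, c i) := by
    apply aux_renyiF_nonneg hα0 hα (Finset.sum_nonneg hc) hsum
  have hsnn : 0 ≤ ∑ i ∈ Icc 2 n, renyiF α (c i) := Finset.sum_nonneg hnn
  -- Cauchy–Schwarz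
  have hCS : (∑ i ∈ Icc 2 n, renyiF α (c i)) ^ 2
      ≤ (Icc 2 n).card * ∑ i ∈ Icc 2 n, (renyiF α (c i)) ^ 2 :=
    sq_sum_le_card_mul_sum_sq
  have hcard : ((Icc 2 n).card : ℝ) = (n : ℝ) - 1 := by
    rw [Nat.card_Icc]
    have : n + 1 - 2 = n - 1 := by omega
    rw [this]
    rw [Nat.cast_sub (by omega : 1 ≤ n)]
    norm_num
  have hsq : (renyiF α (∑ i ∈ Icc 2 n, c i)) ^ 2 ≤ (∑ i ∈ Icc 2 n, renyiF α (c i)) ^ 2 := by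
    apply pow_le_pow_left₀ hFnn hsub
  calc (renyiF α (∑ i ∈ Icc 2 n, c i)) ^ 2
      ≤ (∑ i ∈ Icc 2 n, renyiF α (c i)) ^ 2 := hsq
    _ ≤ (Icc 2 n).card * ∑ i ∈ Icc 2 n, (renyiF α (c i)) ^ 2 := hCS
    _ = ((n:ℝ) - 1) * ∑ i ∈ Icc 2 n, (renyiF α (c i)) ^ 2 := by rw [hcard]
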